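/- Let V be a finite set, π a strictly positive probability vector on V, and η any probability vector on V. For distinct x, y ∈ V, define η^{xy} : V → ℝ by η^{xy}(x) = (π(x)/(π(x)+π(y)))·(η(x)+η(y)), η^{xy}(y) = (π(y)/(π(x)+π(y)))·(η(x)+η(y)), and η^{xy}(z) = η(z) for z ≠ x, y. Then ∑_{z∈V} π(z)·(η^{xy}(z)/π(z) − 1)^2 − ∑_{z∈V} π(z)·(η(z)/π(z) − 1)^2 = −(π(x)π(y)/(π(x)+π(y)))·(η(x)/π(x) − η(y)/π(y))^2. -/
import Mathlib


open Finset

theorem averaging_move_L2_identity {V : Type*} [Fintype V] [DecidableEq V]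
    (π η : V → ℝ) (hπpos : ∀ z, 0 < π z) (hπ1 : ∑ z, π z = 1)
    (hηpos : ∀ z, 0 ≤ η z) (hη1 : ∑ z, η z = 1)
    (x y : V) (hxy : x ≠ y)
    (ηxy : V → ℝ)
    (hηxy : ηxy = fun z =>
      if z = x then π x / (π x + π y) * (η x + η y)
      else if z = y then π y / (π x + π y) * (η x + η y)
      else η z) :
    ∑ z, π z * (ηxy z / π z - 1) ^ 2 - ∑ z, π z * (η z / π z - 1) ^ 2
      = -(π x * π y / (π x + π y) * (η x / π x - η y / π y) ^ 2) := by
  have hx := (hπpos x).ne'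
  have hy := (hπpos y).ne'
  have hxyne : π x + π y ≠ 0 := by have := hπpos x; have := hπpos y; linarith
  rw [← Finset.sum_sub_distrib]
  have key : ∀ z ∈ (univ : Finset V) \ ({x, y} : Finset V),
      π z * (ηxy z / π z - 1) ^ 2 - π z * (η z / π z - 1) ^ 2 = 0 := by
    intro z hz
    simp only [Finset.mem_sdiff, Finset.mem_insert, Finset.mem_singleton] at hz
    have hzx : z ≠ x := fun h => hz.2 (Or.inl h)
    have hzy : z ≠ y := fun h => hz.2 (Or.inr h)
    simp [hηxy, hzx, hzy]
  rw [← Finset.sum_subset (Finset.subset_univ ({x, y} : Finset V))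
    (fun z _ hz => key z (Finset.mem_sdiff.mpr ⟨Finset.mem_univ z, hz⟩))]
  rw [Finset.sum_pair hxy]
  simp only [hηxy, if_pos rfl, hxy.symm, if_neg hxy.symm, if_neg hxy, reduceIte]
  field_simp
  ring
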